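/- Let 𝒜 ⊂ M₊ be such that every nonnegative C¹ function V with ∇V · f ≤ −V on M₊ vanishes on 𝒜. Then for every feasible pair (w, V) of the LP (w continuous, w ≥ 0, V ≥ 0 C¹, w + V ≥ 1, ∇V · f ≤ −V on M₊) one has ∫_{M₊} w dλ ≥ λ(𝒜); hence p₃* ≥ λ(𝒜). -/

import Mathlib

open Set MeasureTheory

/-- Lower bound: if every Lyapunov function vanishes on 𝒜, then every feasible
pair of the Lyapunov LP has cost at least λ(𝒜). -/
theorem lyapunov_lp_lower_bound {n : ℕ}
    (f : EuclideanSpace ℝ (Fin n) → EuclideanSpace ℝ (Fin n))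
    (M 𝓐 : Set (EuclideanSpace ℝ (Fin n)))
    (hMc : IsCompact M) (hMmeas : MeasurableSet M)
    (h𝓐M : 𝓐 ⊆ M) (h𝓐meas : MeasurableSet 𝓐)
    (hvanish : ∀ V : EuclideanSpace ℝ (Fin n) → ℝ, ContDiff ℝ 1 V →
      (∀ x, 0 ≤ V x) → (∀ x ∈ M, fderiv ℝ V x (f x) ≤ -V x) → ∀ x ∈ 𝓐, V x = 0) :
    ∀ w V : EuclideanSpace ℝ (Fin n) → ℝ,
      ContinuousOn w M → ContDiff ℝ 1 V →
      (∀ x ∈ M, 0 ≤ w x) → (∀ x, 0 ≤ V x) →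
      (∀ x ∈ M, 1 ≤ w x + V x) →
      (∀ x ∈ M, fderiv ℝ V x (f x) ≤ -V x) →
      (volume 𝓐).toReal ≤ ∫ x in M, w x := by
  intro w V hw hV hw0 hV0 hwV hlyap
  have hVzero := hvanish V hV hV0 hlyap
  -- w ≥ 1 on 𝒜
  have hw1 : ∀ x ∈ 𝓐, 1 ≤ w x := by
    intro x hx
    have := hwV x (h𝓐M hx)
    rw [hVzero x hx] at this
    linarith
  have h𝓐fin : volume 𝓐 < ⊤ :=
    lt_of_le_of_lt (measure_mono h𝓐M) hMc.measure_lt_top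
  have hwint : IntegrableOn w M := hw.integrableOn_compact hMc
  have hwint𝓐 : IntegrableOn w 𝓐 := hwint.mono_set h𝓐M
  have h1 : (volume 𝓐).toReal = ∫ x in 𝓐, (1 : ℝ) := by
    simp [h𝓐fin.ne]
    rfl
  rw [h1]
  have h2 : ∫ x in 𝓐, (1 : ℝ) ≤ ∫ x in 𝓐, w x := by
    refine setIntegral_mono_on (integrableOn_const h𝓐fin.ne) hwint𝓐 h𝓐meas hw1
  refine h2.trans ?_
  exact setIntegral_mono_set hwint (ae_restrict_of_forall_mem hMmeas hw0)
    (HasSubset.Subset.eventuallyLE h𝓐M)
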